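/- If p ∈ ℕ is odd, then for every domain G ⊂ ℂⁿ, every a ∈ G and every X ∈ ℂⁿ one has S^(p)_G(a;X) = 0. -/

import Mathlib

open Filter MeasureTheory Topology Complex

noncomputable section

/-- The extended-real logarithm: `elog t = -∞` for `t ≤ 0`, `log t` otherwise. -/
def elog (t : ℝ) : EReal := if t ≤ 0 then ⊥ else ((Real.log t : ℝ) : EReal)

/-- The canonical map `EReal → ℝ≥0∞` (negative values and `⊥` go to `0`). -/
def EReal.toENNR (x : EReal) : ENNReal := if x = ⊤ then ⊤ else ENNReal.ofReal x.toReal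

/-- Plurisubharmonicity of an `EReal`-valued function `f` on a set `G ⊆ ℂⁿ`:
`f` is upper semicontinuous on `G` and satisfies the sub-mean value inequality over
every circle lying in a complex line whose corresponding closed disc is contained
in `G`.  The sub-mean inequality `f(a) ≤ (2π)⁻¹ ∫₀^{2π} f(a + r e^{iθ} b) dθ` is
expressed, for every real upper bound `M` of `f` on the circle, in the equivalent
form `∫₀^{2π} (M - f(a + r e^{iθ} b)) dθ ≤ 2π (M - f(a))`, using the lower
integral of `ℝ≥0∞`-valued functions (which handles the value `-∞` correctly). -/
def PSHOn {n : ℕ} (f : (Fin n → ℂ) → EReal) (G : Set (Fin n → ℂ)) : Prop :=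
  UpperSemicontinuousOn f G ∧
  ∀ a ∈ G, ∀ b : Fin n → ℂ, ∀ r : ℝ, 0 < r →
    (∀ μ : ℂ, ‖μ‖ ≤ r → a + μ • b ∈ G) →
    ∀ M : ℝ, (∀ θ : ℝ, f (a + ((r : ℂ) * Complex.exp (θ * Complex.I)) • b) ≤ (M : EReal)) →
      (∫⁻ θ in Set.Ioc (0 : ℝ) (2 * Real.pi),
          ((M : EReal) - f (a + ((r : ℂ) * Complex.exp (θ * Complex.I)) • b)).toENNR)
        ≤ ENNReal.ofReal (2 * Real.pi) * ((M : EReal) - f a).toENNR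

/-- The class of all functions `u : G → [0,1)` with `log u` plurisubharmonic on `G`,
`u` of class `C^p` in a neighbourhood of `a`, and `u(z) ≤ C ‖z-a‖^p` on `G` for some
`C > 0`; i.e. the class of all `u` with `u^{1/p} ∈ 𝒮^{(p)}_G(a)`. -/
def SibonyClass {n : ℕ} (p : ℕ) (G : Set (Fin n → ℂ)) (a : Fin n → ℂ) :
    Set ((Fin n → ℂ) → ℝ) :=
  {u | (∀ z ∈ G, 0 ≤ u z ∧ u z < 1) ∧ PSHOn (fun z => elog (u z)) G ∧
    (∃ V ∈ 𝓝 a, ContDiffOn ℝ p u V) ∧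
    ∃ C : ℝ, 0 < C ∧ ∀ z ∈ G, u z ≤ C * ‖z - a‖ ^ p}

/-- The class `𝒦_G(a)`:  all `u : G → [0,1)` with `log u` plurisubharmonic on `G`
and `u(z) ≤ C ‖z-a‖` on `G` for some `C > 0`. -/
def GreenClass {n : ℕ} (G : Set (Fin n → ℂ)) (a : Fin n → ℂ) :
    Set ((Fin n → ℂ) → ℝ) :=
  {u | (∀ z ∈ G, 0 ≤ u z ∧ u z < 1) ∧ PSHOn (fun z => elog (u z)) G ∧
    ∃ C : ℝ, 0 < C ∧ ∀ z ∈ G, u z ≤ C * ‖z - a‖}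

/-- `limsup_{ℂ ∋ μ → 0} v(a + μ X) / |μ|`. -/
def dilat {n : ℕ} (v : (Fin n → ℂ) → ℝ) (a X : Fin n → ℂ) : ℝ :=
  Filter.limsup (fun μ : ℂ => v (a + μ • X) / ‖μ‖) (𝓝[≠] (0 : ℂ))

/-- The higher order Sibony function `s^{(p)}_G(a,z)`. -/
def sibonyFun {n : ℕ} (p : ℕ) (G : Set (Fin n → ℂ)) (a z : Fin n → ℂ) : ℝ :=
  sSup ((fun u => u z ^ (1 / (p : ℝ))) '' SibonyClass p G a)

/-- The higher order Sibony pseudometric `S^{(p)}_G(a;X)`. -/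
def sibonyMetric {n : ℕ} (p : ℕ) (G : Set (Fin n → ℂ)) (a X : Fin n → ℂ) : ℝ :=
  sSup ((fun u => dilat (fun z => u z ^ (1 / (p : ℝ))) a X) '' SibonyClass p G a)

/-- The pluricomplex Green function `g_G(a,z)`. -/
def greenFun {n : ℕ} (G : Set (Fin n → ℂ)) (a z : Fin n → ℂ) : ℝ :=
  sSup ((fun u => u z) '' GreenClass G a)

/-- The Azukawa pseudometric `A_G(a;X)`. -/
def azukawa {n : ℕ} (G : Set (Fin n → ℂ)) (a X : Fin n → ℂ) : ℝ :=
  sSup ((fun u => dilat u a X) '' GreenClass G a)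

/-- The Möbius pseudodistance `m_G(a,z)`. -/
def mobiusFun {n : ℕ} (G : Set (Fin n → ℂ)) (a z : Fin n → ℂ) : ℝ :=
  sSup {t | ∃ f : (Fin n → ℂ) → ℂ, DifferentiableOn ℂ f G ∧
    (∀ w ∈ G, ‖f w‖ < 1) ∧ f a = 0 ∧ t = ‖f z‖}

/-- The Carathéodory–Reiffen pseudometric `γ_G(a;X)`. -/
def caratheodory {n : ℕ} (G : Set (Fin n → ℂ)) (a X : Fin n → ℂ) : ℝ :=
  sSup {t | ∃ f : (Fin n → ℂ) → ℂ, DifferentiableOn ℂ f G ∧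
    (∀ w ∈ G, ‖f w‖ < 1) ∧ f a = 0 ∧ t = ‖fderiv ℂ f a X‖}

/-! ### Auxiliary lemmas for the proof of Statement 1 -/

section Aux

open Set Metric

/-- On a uniquely-differentiable subset of an open set where `h` is `C^p`, the iterated
derivative within the subset coincides with the global iterated derivative. -/
private lemma iteratedDerivWithin_eq_global {p : ℕ} {h : ℝ → ℝ} {U s : Set ℝ} (hU : IsOpen U)
    (hcd : ContDiffOn ℝ p h U) (hsub : s ⊆ U) (hs : UniqueDiffOn ℝ s) {m : ℕ} (hm : m ≤ p)
    {x : ℝ} (hx : x ∈ s) :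
    iteratedDerivWithin m h s x = iteratedDeriv m h x := by
  have hT : HasFTaylorSeriesUpToOn (p : ℕ∞) h (ftaylorSeriesWithin ℝ h U) s :=
    (hcd.ftaylorSeriesWithin hU.uniqueDiffOn).mono hsub
  have h1 : ftaylorSeriesWithin ℝ h U x m = iteratedFDerivWithin ℝ m h s x :=
    hT.eq_iteratedFDerivWithin_of_uniqueDiffOn (by exact_mod_cast hm) hs hx
  have h2 : iteratedFDerivWithin ℝ m h U x = iteratedFDeriv ℝ m h x :=
    iteratedFDerivWithin_of_isOpen m hU (hsub hx)
  have h3 : ftaylorSeriesWithin ℝ h U x m = iteratedFDerivWithin ℝ m h U x := rfl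
  rw [iteratedDerivWithin_eq_iteratedFDerivWithin, iteratedDeriv_eq_iteratedFDeriv, ← h1, h3, h2]

/-- Taylor's theorem with Lagrange remainder, at order `k ≤ p`, for a function whose
derivatives of order `< k` vanish at `0`. -/
private lemma taylor_step {h : ℝ → ℝ} {R : ℝ} {p k : ℕ} (hk1 : 1 ≤ k) (hkp : k ≤ p)
    (hcd : ContDiffOn ℝ p h (Set.Ioo (-R) R))
    (hzero : ∀ j, j < k → iteratedDeriv j h 0 = 0)
    {t : ℝ} (ht0 : 0 < t) (htR : t < R) :
    ∃ ξ ∈ Set.Ioo 0 t, h t = iteratedDeriv k h ξ * t ^ k / (k.factorial : ℝ) := by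
  obtain ⟨m, rfl⟩ : ∃ m, k = m + 1 := ⟨k - 1, by omega⟩
  have hRO : Set.Icc (0 : ℝ) t ⊆ Set.Ioo (-R) R := fun x hx =>
    ⟨lt_of_lt_of_le (by linarith) hx.1, lt_of_le_of_lt hx.2 htR⟩
  have hmp : m ≤ p := by omega
  have hcdIcc : ContDiffOn ℝ m h (Set.Icc 0 t) :=
    (hcd.of_le (by exact_mod_cast hmp)).mono hRO
  have hEq : ∀ x ∈ Set.Icc (0 : ℝ) t,
      iteratedDerivWithin m h (Set.Icc 0 t) x = iteratedDeriv m h x := fun x hx =>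
    iteratedDerivWithin_eq_global isOpen_Ioo hcd hRO (uniqueDiffOn_Icc ht0) hmp hx
  have hdiff : DifferentiableOn ℝ (iteratedDeriv m h) (Set.Ioo (-R) R) := by
    have h1 := hcd.differentiableOn_iteratedDerivWithin (m := m)
      (by exact_mod_cast (by omega : m < p)) isOpen_Ioo.uniqueDiffOn
    exact h1.congr fun x hx =>
      (iteratedDerivWithin_eq_global isOpen_Ioo hcd subset_rfl
        isOpen_Ioo.uniqueDiffOn hmp hx).symm
  have hf' : DifferentiableOn ℝ (iteratedDerivWithin m h (Set.Icc 0 t)) (Set.Ioo 0 t) := by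
    intro x hx
    have hxI : x ∈ Set.Icc (0 : ℝ) t := Set.Ioo_subset_Icc_self hx
    have hat : DifferentiableAt ℝ (iteratedDeriv m h) x :=
      hdiff.differentiableAt (isOpen_Ioo.mem_nhds (hRO hxI))
    exact hat.differentiableWithinAt.congr (fun y hy => hEq y (Set.Ioo_subset_Icc_self hy))
      (hEq x hxI)
  have hTL := taylor_mean_remainder_lagrange (n := m) (x₀ := 0) (x := t) ht0.ne
    (by rwa [Set.uIcc_of_le ht0.le]) (by rwa [Set.uIcc_of_le ht0.le, Set.uIoo_of_le ht0.le])
  rw [Set.uIcc_of_le ht0.le, Set.uIoo_of_le ht0.le] at hTL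
  obtain ⟨ξ, hξ, hT⟩ := hTL
  have hTz : taylorWithinEval h m (Set.Icc 0 t) 0 t = 0 := by
    rw [taylor_within_apply]
    apply Finset.sum_eq_zero
    intro j hj
    have hjm : j ≤ m := Nat.lt_succ_iff.mp (Finset.mem_range.mp hj)
    rw [iteratedDerivWithin_eq_global isOpen_Ioo hcd hRO (uniqueDiffOn_Icc ht0)
      (le_trans hjm hmp) (Set.left_mem_Icc.mpr ht0.le), hzero j (by omega)]
    simp
  rw [hTz, sub_zero, sub_zero] at hT
  refine ⟨ξ, hξ, ?_⟩
  rw [hT, iteratedDerivWithin_eq_global isOpen_Ioo hcd hRO (uniqueDiffOn_Icc ht0) hkp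
    (Set.Ioo_subset_Icc_self hξ)]

/-- If `|h t| ≤ C |t|^p` near `0` and `h` is `C^p`, then all derivatives of order `< p`
vanish at `0`. -/
private lemma deriv_vanish {h : ℝ → ℝ} {R C : ℝ} {p : ℕ} (hR : 0 < R) (hC : 0 ≤ C)
    (hcd : ContDiffOn ℝ p h (Set.Ioo (-R) R))
    (hub : ∀ t ∈ Set.Ioo (-R) R, |h t| ≤ C * |t| ^ p) :
    ∀ k, k < p → iteratedDeriv k h 0 = 0 := by
  intro k
  induction k using Nat.strong_induction_on with
  | _ k IH =>
  intro hkp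
  have h0mem : (0 : ℝ) ∈ Set.Ioo (-R) R := ⟨by linarith, hR⟩
  rcases Nat.eq_zero_or_pos k with rfl | hk1
  · have h0 := hub 0 h0mem
    simp only [abs_zero, zero_pow (by omega : p ≠ 0), mul_zero] at h0
    have : h 0 = 0 := abs_eq_zero.mp (le_antisymm h0 (abs_nonneg _))
    simpa using this
  · set D := iteratedDeriv k h with hD
    have hDcont : ContinuousAt D 0 := by
      have h1 := hcd.continuousOn_iteratedDerivWithin (m := k)
        (by exact_mod_cast hkp.le) isOpen_Ioo.uniqueDiffOn
      have h2 : ContinuousOn D (Set.Ioo (-R) R) := h1.congr fun x hx =>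
        (iteratedDerivWithin_eq_global isOpen_Ioo hcd subset_rfl
          isOpen_Ioo.uniqueDiffOn hkp.le hx).symm
      exact h2.continuousAt (isOpen_Ioo.mem_nhds h0mem)
    have key : ∀ ε > (0 : ℝ), |D 0| ≤ ε := by
      intro ε hε
      obtain ⟨δ, hδ0, hδ⟩ := Metric.continuousAt_iff.mp hDcont (ε / 2) (by positivity)
      set B := (k.factorial : ℝ) * C + 1 with hB
      have hB0 : 0 < B := by positivity
      set t := min (min δ R) (min 1 (ε / (2 * B))) / 2 with htdef
      have hmin0 : 0 < min (min δ R) (min 1 (ε / (2 * B))) := by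
        apply lt_min (lt_min hδ0 hR) (lt_min one_pos (by positivity))
      have ht0 : 0 < t := by positivity
      have htδ : t < δ := by
        have : t < min (min δ R) (min 1 (ε / (2 * B))) := by
          rw [htdef]; linarith
        calc t < min (min δ R) (min 1 (ε / (2 * B))) := this
          _ ≤ δ := le_trans (min_le_left _ _) (min_le_left _ _)
      have htR : t < R := by
        have : t < min (min δ R) (min 1 (ε / (2 * B))) := by
          rw [htdef]; linarith
        calc t < min (min δ R) (min 1 (ε / (2 * B))) := this
          _ ≤ R := le_trans (min_le_left _ _) (min_le_right _ _)
      have ht1 : t ≤ 1 := by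
        have : min (min δ R) (min 1 (ε / (2 * B))) ≤ 1 :=
          le_trans (min_le_right _ _) (min_le_left _ _)
        rw [htdef]; linarith
      have htε : B * t ≤ ε / 2 := by
        have h1 : min (min δ R) (min 1 (ε / (2 * B))) ≤ ε / (2 * B) :=
          le_trans (min_le_right _ _) (min_le_right _ _)
        have h2 : t ≤ ε / (2 * B) := by rw [htdef]; linarith
        calc B * t ≤ B * (ε / (2 * B)) := by
              exact mul_le_mul_of_nonneg_left h2 hB0.le
          _ = ε / 2 := by field_simp
      obtain ⟨ξ, hξ, hval⟩ := taylor_step hk1 hkp.le hcd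
        (fun j hj => IH j hj (hj.trans hkp)) ht0 htR
      have htk : (0 : ℝ) < t ^ k := pow_pos ht0 k
      have hfac : (0 : ℝ) < (k.factorial : ℝ) := by positivity
      have hDξ : D ξ = h t * (k.factorial : ℝ) / t ^ k := by
        rw [hval]; field_simp; rfl
      have hht : |h t| ≤ C * t ^ p := by
        have := hub t ⟨by linarith, htR⟩
        rwa [abs_of_pos ht0] at this
      have hDξbound : |D ξ| ≤ (k.factorial : ℝ) * C * t ^ (p - k) := by
        rw [hDξ, abs_div, abs_mul, abs_of_pos htk, abs_of_pos hfac]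
        rw [div_le_iff₀ htk]
        have hsplit : t ^ p = t ^ (p - k) * t ^ k := by
          rw [← pow_add]; congr 1; omega
        calc |h t| * (k.factorial : ℝ) ≤ (C * t ^ p) * (k.factorial : ℝ) :=
              mul_le_mul_of_nonneg_right hht hfac.le
          _ = (k.factorial : ℝ) * C * t ^ (p - k) * t ^ k := by rw [hsplit]; ring
      have hDξ2 : |D ξ| ≤ ε / 2 := by
        have h1 : t ^ (p - k) ≤ t := by
          calc t ^ (p - k) ≤ t ^ 1 := pow_le_pow_of_le_one ht0.le ht1 (by omega)
            _ = t := pow_one t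
        calc |D ξ| ≤ (k.factorial : ℝ) * C * t ^ (p - k) := hDξbound
          _ ≤ (k.factorial : ℝ) * C * t := by
              apply mul_le_mul_of_nonneg_left h1 (by positivity)
          _ ≤ B * t := mul_le_mul_of_nonneg_right (by rw [hB]; linarith) ht0.le
          _ ≤ ε / 2 := htε
      have hclose : |D 0 - D ξ| < ε / 2 := by
        have hd := hδ (x := ξ) (by
          rw [Real.dist_eq, sub_zero, abs_of_pos hξ.1]
          exact lt_trans hξ.2 htδ)
        rw [Real.dist_eq] at hd
        rw [abs_sub_comm]
        simpa using hd
      calc |D 0| = |(D 0 - D ξ) + D ξ| := by ring_nf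
        _ ≤ |D 0 - D ξ| + |D ξ| := abs_add_le _ _
        _ ≤ ε / 2 + ε / 2 := add_le_add hclose.le hDξ2
        _ = ε := by ring
    have : |D 0| ≤ 0 := by
      by_contra hcon
      push_neg at hcon
      have := key (|D 0| / 2) (by linarith)
      linarith
    exact abs_eq_zero.mp (le_antisymm this (abs_nonneg _))

/-- If in addition `h ≥ 0`, then the `p`-th derivative at `0` is nonnegative. -/
private lemma deriv_p_nonneg {h : ℝ → ℝ} {R : ℝ} {p : ℕ} (hR : 0 < R) (hp1 : 1 ≤ p)
    (hcd : ContDiffOn ℝ p h (Set.Ioo (-R) R))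
    (hpos : ∀ t ∈ Set.Ioo (-R) R, 0 ≤ h t)
    (hzero : ∀ j, j < p → iteratedDeriv j h 0 = 0) :
    0 ≤ iteratedDeriv p h 0 := by
  set D := iteratedDeriv p h with hD
  have h0mem : (0 : ℝ) ∈ Set.Ioo (-R) R := ⟨by linarith, hR⟩
  have hDcont : ContinuousAt D 0 := by
    have h1 := hcd.continuousOn_iteratedDerivWithin (m := p) le_rfl isOpen_Ioo.uniqueDiffOn
    have h2 : ContinuousOn D (Set.Ioo (-R) R) := h1.congr fun x hx =>
      (iteratedDerivWithin_eq_global isOpen_Ioo hcd subset_rfl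
        isOpen_Ioo.uniqueDiffOn le_rfl hx).symm
    exact h2.continuousAt (isOpen_Ioo.mem_nhds h0mem)
  have key : ∀ ε > (0 : ℝ), -ε ≤ D 0 := by
    intro ε hε
    obtain ⟨δ, hδ0, hδ⟩ := Metric.continuousAt_iff.mp hDcont ε hε
    set t := min δ R / 2 with htdef
    have ht0 : 0 < t := by positivity
    have htδ : t < δ := by
      have : min δ R ≤ δ := min_le_left _ _
      rw [htdef]; linarith [lt_min hδ0 hR]
    have htR : t < R := by
      have : min δ R ≤ R := min_le_right _ _
      rw [htdef]; linarith [lt_min hδ0 hR]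
    obtain ⟨ξ, hξ, hval⟩ := taylor_step hp1 le_rfl hcd hzero ht0 htR
    have htk : (0 : ℝ) < t ^ p := pow_pos ht0 p
    have hfac : (0 : ℝ) < (p.factorial : ℝ) := by positivity
    have hDξ : 0 ≤ D ξ := by
      have hht : 0 ≤ h t := hpos t ⟨by linarith, htR⟩
      have : D ξ = h t * (p.factorial : ℝ) / t ^ p := by rw [hval]; field_simp; rfl
      rw [this]
      positivity
    have hclose : |D 0 - D ξ| < ε := by
      have hd := hδ (x := ξ) (by
        rw [Real.dist_eq, sub_zero, abs_of_pos hξ.1]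
        exact lt_trans hξ.2 htδ)
      rw [Real.dist_eq] at hd
      rw [abs_sub_comm]
      simpa using hd
    have := abs_lt.mp hclose
    linarith
  by_contra hcon
  push_neg at hcon
  have := key (-(D 0) / 2) (by linarith)
  linarith

/-- The key analytic fact:  a nonnegative `C^p` function on a ball around `0 ∈ ℂ` which is
`O(‖μ‖^p)` with `p` odd is in fact `o(‖μ‖^p)`. -/
private lemma key_tendsto {p : ℕ} (hp : Odd p) {g : ℂ → ℝ} {R C : ℝ} (hR : 0 < R) (hC : 0 ≤ C)
    (hcd : ContDiffOn ℝ p g (Metric.ball 0 R))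
    (h0 : ∀ μ ∈ Metric.ball (0 : ℂ) R, 0 ≤ g μ)
    (hub : ∀ μ ∈ Metric.ball (0 : ℂ) R, g μ ≤ C * ‖μ‖ ^ p) :
    Filter.Tendsto (fun μ : ℂ => g μ / ‖μ‖ ^ p) (𝓝[≠] (0 : ℂ)) (𝓝 0) := by
  have hp1 : 1 ≤ p := hp.pos
  set L : ℂ → (ℝ →L[ℝ] ℂ) := fun e => ContinuousLinearMap.toSpanSingleton ℝ e with hL
  have hLapp : ∀ e x, L e x = x • e := fun e x => rfl
  have hmem : ∀ e : ℂ, ‖e‖ = 1 → ∀ t ∈ Set.Ioo (-R) R, (L e) t ∈ Metric.ball (0 : ℂ) R := by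
    intro e he t ht
    rw [hLapp, mem_ball_zero_iff, norm_smul, he, mul_one, Real.norm_eq_abs, abs_lt]
    exact ⟨ht.1, ht.2⟩
  have hcde : ∀ e : ℂ, ‖e‖ = 1 → ContDiffOn ℝ p (g ∘ L e) (Set.Ioo (-R) R) := by
    intro e he
    exact hcd.comp ((L e).contDiff.contDiffOn) (fun t ht => hmem e he t ht)
  have hubR : ∀ e : ℂ, ‖e‖ = 1 → ∀ t ∈ Set.Ioo (-R) R, |(g ∘ L e) t| ≤ C * |t| ^ p := by
    intro e he t ht
    have hm := hmem e he t ht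
    rw [Function.comp_apply, _root_.abs_of_nonneg (h0 _ hm)]
    calc g (L e t) ≤ C * ‖L e t‖ ^ p := hub _ hm
      _ = C * |t| ^ p := by
          rw [hLapp, norm_smul, he, mul_one, Real.norm_eq_abs]
  have hzeroe : ∀ e : ℂ, ‖e‖ = 1 → ∀ j, j < p → iteratedDeriv j (g ∘ L e) 0 = 0 :=
    fun e he => deriv_vanish hR hC (hcde e he) (hubR e he)
  have hpre : ∀ e : ℂ, ‖e‖ = 1 → (L e) ⁻¹' Metric.ball (0 : ℂ) R = Set.Ioo (-R) R := by
    intro e he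
    ext x
    simp only [Set.mem_preimage, mem_ball_zero_iff, hLapp, norm_smul, he, mul_one,
      Real.norm_eq_abs, Set.mem_Ioo, abs_lt]
  have hDe : ∀ e : ℂ, ‖e‖ = 1 → ∀ s ∈ Set.Ioo (-R) R,
      iteratedDeriv p (g ∘ L e) s = iteratedFDeriv ℝ p g (s • e) (fun _ => e) := by
    intro e he s hs
    have hsmem : (L e) s ∈ Metric.ball (0 : ℂ) R := hmem e he s hs
    have hopen : IsOpen ((L e) ⁻¹' Metric.ball (0 : ℂ) R) :=
      isOpen_ball.preimage (L e).continuous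
    have hsufd : UniqueDiffOn ℝ ((L e) ⁻¹' Metric.ball (0 : ℂ) R) := hopen.uniqueDiffOn
    have hspre : s ∈ (L e) ⁻¹' Metric.ball (0 : ℂ) R := hsmem
    have h1 := (L e).iteratedFDerivWithin_comp_right (i := p) hcd isOpen_ball.uniqueDiffOn hsufd
      hsmem (by exact_mod_cast le_refl p)
    have h2 : iteratedFDeriv ℝ p (g ∘ L e) s =
        iteratedFDerivWithin ℝ p (g ∘ L e) ((L e) ⁻¹' Metric.ball (0 : ℂ) R) s :=
      (iteratedFDerivWithin_of_isOpen p hopen hspre).symm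
    have h3 : iteratedFDerivWithin ℝ p g (Metric.ball (0 : ℂ) R) ((L e) s) =
        iteratedFDeriv ℝ p g ((L e) s) :=
      iteratedFDerivWithin_of_isOpen p isOpen_ball hsmem
    rw [iteratedDeriv_eq_iteratedFDeriv, h2, h1, h3]
    rw [ContinuousMultilinearMap.compContinuousLinearMap_apply]
    have : (L e) s = s • e := rfl
    rw [this]
    congr 1
    funext i
    rw [hLapp, one_smul]
  have hq0 : ∀ e : ℂ, ‖e‖ = 1 → 0 ≤ iteratedFDeriv ℝ p g 0 (fun _ => e) := by
    intro e he
    have hposR : ∀ t ∈ Set.Ioo (-R) R, 0 ≤ (g ∘ L e) t := fun t ht => h0 _ (hmem e he t ht)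
    have h1 := deriv_p_nonneg hR hp1 (hcde e he) hposR (hzeroe e he)
    rwa [hDe e he 0 ⟨by linarith, hR⟩, zero_smul] at h1
  have hq : ∀ e : ℂ, ‖e‖ = 1 → iteratedFDeriv ℝ p g 0 (fun _ => e) = 0 := by
    intro e he
    have h1 := hq0 e he
    have h2 := hq0 (-e) (by rwa [norm_neg])
    have h3 : iteratedFDeriv ℝ p g 0 (fun _ => -e) =
        ((-1 : ℝ) ^ p) • iteratedFDeriv ℝ p g 0 (fun _ => e) := by
      have h4 := (iteratedFDeriv ℝ p g 0).map_smul_univ (fun _ : Fin p => (-1 : ℝ))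
        (fun _ => e)
      simpa using h4
    rw [h3, hp.neg_one_pow] at h2
    simp only [neg_smul, one_smul, Left.nonneg_neg_iff] at h2
    linarith
  have hΦ : ContinuousAt (iteratedFDeriv ℝ p g) 0 := by
    have h1 := hcd.continuousOn_iteratedFDerivWithin (m := p) le_rfl isOpen_ball.uniqueDiffOn
    have h2 : ContinuousOn (iteratedFDeriv ℝ p g) (Metric.ball (0 : ℂ) R) :=
      h1.congr fun x hx => (iteratedFDerivWithin_of_isOpen p isOpen_ball hx).symm
    exact h2.continuousAt (isOpen_ball.mem_nhds (mem_ball_self hR))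
  rw [Metric.tendsto_nhdsWithin_nhds]
  intro ε hε
  obtain ⟨δ₁, hδ₁0, hδ₁⟩ := Metric.continuousAt_iff.mp hΦ (ε / 2) (by positivity)
  refine ⟨min δ₁ R, lt_min hδ₁0 hR, ?_⟩
  intro μ hμne hμδ
  have hμ0 : μ ≠ 0 := hμne
  have ht0 : 0 < ‖μ‖ := norm_pos_iff.mpr hμ0
  set t := ‖μ‖ with htdef
  set e := t⁻¹ • μ with hedef
  have he : ‖e‖ = 1 := by
    rw [hedef, norm_smul, Real.norm_eq_abs, abs_of_pos (inv_pos.mpr ht0),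
      inv_mul_cancel₀ ht0.ne']
  have hμeq : t • e = μ := smul_inv_smul₀ ht0.ne' μ
  have hμδ' : t < min δ₁ R := by rwa [dist_zero_right] at hμδ
  have htR : t < R := lt_of_lt_of_le hμδ' (min_le_right _ _)
  have htδ₁ : t < δ₁ := lt_of_lt_of_le hμδ' (min_le_left _ _)
  obtain ⟨ξ, hξ, hval⟩ := taylor_step hp1 le_rfl (hcde e he) (hzeroe e he) ht0 htR
  have hξIoo : ξ ∈ Set.Ioo (-R) R := ⟨by linarith [hξ.1], lt_trans hξ.2 htR⟩
  have hvalμ : g μ = iteratedFDeriv ℝ p g (ξ • e) (fun _ => e) * t ^ p / (p.factorial : ℝ) := by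
    have h1 : (g ∘ L e) t = g μ := by
      rw [Function.comp_apply, hLapp, hμeq]
    rw [← h1, hval, hDe e he ξ hξIoo]
  have hbound : |iteratedFDeriv ℝ p g (ξ • e) (fun _ => e)| < ε / 2 := by
    have h1 : iteratedFDeriv ℝ p g (ξ • e) (fun _ => e) =
        (iteratedFDeriv ℝ p g (ξ • e) - iteratedFDeriv ℝ p g 0) (fun _ => e) := by
      rw [ContinuousMultilinearMap.sub_apply, hq e he, sub_zero]
    rw [h1]
    have h2 : ‖(iteratedFDeriv ℝ p g (ξ • e) - iteratedFDeriv ℝ p g 0) (fun _ => e)‖ ≤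
        ‖iteratedFDeriv ℝ p g (ξ • e) - iteratedFDeriv ℝ p g 0‖ * ∏ _i : Fin p, ‖e‖ :=
      ContinuousMultilinearMap.le_opNorm _ _
    rw [he] at h2
    simp only [Finset.prod_const_one, mul_one] at h2
    have h3 : dist (ξ • e) 0 < δ₁ := by
      rw [dist_zero_right, norm_smul, he, mul_one, Real.norm_eq_abs, abs_of_pos hξ.1]
      exact lt_trans hξ.2 htδ₁
    have h4 := hδ₁ h3
    rw [dist_eq_norm] at h4
    calc |iteratedFDeriv ℝ p g (ξ • e) (fun _ => e) -
          iteratedFDeriv ℝ p g 0 (fun _ => e)| ≤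
          ‖iteratedFDeriv ℝ p g (ξ • e) - iteratedFDeriv ℝ p g 0‖ := by
          simpa [ContinuousMultilinearMap.sub_apply, Real.norm_eq_abs] using h2
      _ < ε / 2 := h4
  have htp : (0 : ℝ) < t ^ p := pow_pos ht0 p
  have hfac : (1 : ℝ) ≤ (p.factorial : ℝ) := Nat.one_le_cast.mpr (Nat.factorial_pos p)
  have hgoal : |g μ / t ^ p| < ε := by
    have h1 : g μ / t ^ p = iteratedFDeriv ℝ p g (ξ • e) (fun _ => e) / (p.factorial : ℝ) := by
      rw [hvalμ]; field_simp
    rw [h1, abs_div, abs_of_pos (by linarith : (0:ℝ) < (p.factorial : ℝ))]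
    have h2 : |iteratedFDeriv ℝ p g (ξ • e) (fun _ => e)| / (p.factorial : ℝ) ≤
        |iteratedFDeriv ℝ p g (ξ • e) (fun _ => e)| :=
      div_le_self (abs_nonneg _) hfac
    calc |iteratedFDeriv ℝ p g (ξ • e) (fun _ => e)| / (p.factorial : ℝ)
        ≤ |iteratedFDeriv ℝ p g (ξ • e) (fun _ => e)| := h2
      _ < ε / 2 := hbound
      _ < ε := by linarith
  rw [dist_zero_right, Real.norm_eq_abs]
  exact hgoal

end Aux

/-- If `p ∈ ℕ` is odd, then for every domain `G ⊆ ℂⁿ`, every `a ∈ G`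
and every `X ∈ ℂⁿ` one has `S^{(p)}_G(a;X) = 0`. -/
theorem sibonyMetric_eq_zero_of_odd {n p : ℕ} (hp : Odd p)
    (G : Set (Fin n → ℂ)) (hGo : IsOpen G) (hGc : IsConnected G)
    (a : Fin n → ℂ) (ha : a ∈ G) (X : Fin n → ℂ) :
    sibonyMetric p G a X = 0 := by
  have hppos : 0 < p := hp.pos
  have hpR : (0 : ℝ) < (p : ℝ) := by exact_mod_cast hppos
  have hinvp : (1 : ℝ) / (p : ℝ) ≠ 0 := by positivity
  set S := ((fun u => dilat (fun z => u z ^ (1 / (p : ℝ))) a X) '' SibonyClass p G a) with hS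
  -- the zero function belongs to the Sibony class
  have hzero_mem : (fun _ : Fin n → ℂ => (0 : ℝ)) ∈ SibonyClass p G a := by
    refine ⟨fun z _ => ⟨le_rfl, one_pos⟩, ?_, ⟨Set.univ, Filter.univ_mem, contDiffOn_const⟩,
      1, one_pos, fun z _ => by positivity⟩
    have helog : elog (0 : ℝ) = ⊥ := if_pos le_rfl
    constructor
    · exact upperSemicontinuousOn_const
    · intro a' _ b r hr _ M _
      have h1 : ((M : EReal) - elog (0 : ℝ)).toENNR = ⊤ := by
        rw [helog]
        have : (M : EReal) - ⊥ = ⊤ := EReal.coe_sub_bot M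
        rw [this, EReal.toENNR, if_pos rfl]
      rw [h1, ENNReal.mul_top (by
        simp only [ne_eq, ENNReal.ofReal_eq_zero, not_le]
        positivity)]
      exact le_top
  have hzeroS : (0 : ℝ) ∈ S := by
    refine ⟨fun _ => (0 : ℝ), hzero_mem, ?_⟩
    show dilat (fun _ : Fin n → ℂ => ((0 : ℝ) ^ (1 / (p : ℝ)))) a X = 0
    unfold dilat
    have h1 : (fun μ : ℂ => ((fun _ : Fin n → ℂ => ((0:ℝ) ^ (1 / (p : ℝ)))) (a + μ • X))
        / ‖μ‖) = fun _ => (0 : ℝ) := by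
      funext μ
      simp only [Real.zero_rpow hinvp, zero_div]
    rw [h1, Filter.limsup_const]
  -- every element of `S` is nonpositive (indeed zero)
  have hSle : ∀ x ∈ S, x ≤ (0 : ℝ) := by
    rintro x ⟨u, hu, rfl⟩
    show dilat (fun z => u z ^ (1 / (p : ℝ))) a X ≤ 0
    obtain ⟨hu01, _hpsh, ⟨V, hV, hudiff⟩, C, hC, hub⟩ := hu
    -- find a ball around `a` inside `V ∩ G`
    have hVG : V ∩ G ∈ 𝓝 a := Filter.inter_mem hV (hGo.mem_nhds ha)
    obtain ⟨ρ, hρ0, hρ⟩ := Metric.mem_nhds_iff.mp hVG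
    set R := ρ / (‖X‖ + 1) with hRdef
    have hX1 : (0 : ℝ) < ‖X‖ + 1 := by positivity
    have hR : 0 < R := by positivity
    set g : ℂ → ℝ := fun μ => u (a + μ • X) with hg
    have hmapball : ∀ μ ∈ Metric.ball (0 : ℂ) R, a + μ • X ∈ Metric.ball a ρ := by
      intro μ hμ
      rw [Metric.mem_ball, dist_eq_norm, add_sub_cancel_left, norm_smul]
      rw [mem_ball_zero_iff] at hμ
      calc ‖μ‖ * ‖X‖ ≤ ‖μ‖ * (‖X‖ + 1) := by
            apply mul_le_mul_of_nonneg_left (by linarith) (norm_nonneg μ)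
        _ < R * (‖X‖ + 1) := by
            apply mul_lt_mul_of_pos_right hμ hX1
        _ = ρ := by rw [hRdef]; field_simp
    have hcdg : ContDiffOn ℝ p g (Metric.ball 0 R) := by
      have hlin : ContDiff ℝ p (fun μ : ℂ => a + μ • X) := by
        apply contDiff_const.add
        have h1 : ContDiff ℂ p (fun μ : ℂ => μ • X) := contDiff_id.smul contDiff_const
        exact h1.restrict_scalars ℝ
      exact hudiff.comp hlin.contDiffOn
        (fun μ hμ => (hρ (hmapball μ hμ)).1)
    have h0g : ∀ μ ∈ Metric.ball (0 : ℂ) R, 0 ≤ g μ :=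
      fun μ hμ => (hu01 _ (hρ (hmapball μ hμ)).2).1
    set C' := C * ‖X‖ ^ p with hC'
    have hC'0 : 0 ≤ C' := by positivity
    have hubg : ∀ μ ∈ Metric.ball (0 : ℂ) R, g μ ≤ C' * ‖μ‖ ^ p := by
      intro μ hμ
      calc g μ ≤ C * ‖(a + μ • X) - a‖ ^ p := hub _ (hρ (hmapball μ hμ)).2
        _ = C' * ‖μ‖ ^ p := by
            rw [add_sub_cancel_left, norm_smul, mul_pow, hC']; ring
    have hkey := key_tendsto hp hR hC'0 hcdg h0g hubg
    -- compose with the `p`-th root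
    have hroot : ContinuousAt (fun x : ℝ => x ^ (1 / (p : ℝ))) 0 :=
      Real.continuousAt_rpow_const 0 _ (Or.inr (by positivity))
    have hvt : Filter.Tendsto (fun μ : ℂ => (g μ / ‖μ‖ ^ p) ^ (1 / (p : ℝ)))
        (𝓝[≠] (0 : ℂ)) (𝓝 0) := by
      have h1 := hroot.tendsto.comp hkey
      rwa [Real.zero_rpow hinvp] at h1
    have heq : ∀ᶠ μ in 𝓝[≠] (0 : ℂ),
        u (a + μ • X) ^ (1 / (p : ℝ)) / ‖μ‖ = (g μ / ‖μ‖ ^ p) ^ (1 / (p : ℝ)) := by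
      have hball : ∀ᶠ μ in 𝓝[≠] (0 : ℂ), μ ∈ Metric.ball (0 : ℂ) R :=
        Filter.eventually_iff_exists_mem.mpr ⟨{(0:ℂ)}ᶜ ∩ Metric.ball (0 : ℂ) R,
          inter_mem_nhdsWithin _ (Metric.ball_mem_nhds _ hR), fun μ hμ => hμ.2⟩
      have hne : ∀ᶠ μ in 𝓝[≠] (0 : ℂ), μ ≠ 0 := self_mem_nhdsWithin
      filter_upwards [hball, hne] with μ hμball hμne
      have hμn : 0 < ‖μ‖ := norm_pos_iff.mpr hμne
      have h0gμ : 0 ≤ g μ := h0g μ hμball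
      have hden : ((‖μ‖ ^ p : ℝ)) ^ (1 / (p : ℝ)) = ‖μ‖ := by
        rw [← Real.rpow_natCast ‖μ‖ p, ← Real.rpow_mul (norm_nonneg μ), mul_one_div,
          div_self (by positivity : (p : ℝ) ≠ 0), Real.rpow_one]
      rw [Real.div_rpow h0gμ (by positivity), hden]
    have h2 : dilat (fun z => u z ^ (1 / (p : ℝ))) a X =
        Filter.limsup (fun μ : ℂ => u (a + μ • X) ^ (1 / (p : ℝ)) / ‖μ‖)
          (𝓝[≠] (0 : ℂ)) := rfl
    rw [h2, Filter.limsup_congr heq, hvt.limsup_eq]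
  -- conclude
  have hbdd : BddAbove S := ⟨0, hSle⟩
  have hne : S.Nonempty := ⟨0, hzeroS⟩
  rw [sibonyMetric, ← hS]
  exact le_antisymm (csSup_le hne hSle) (le_csSup hbdd hzeroS)

end
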